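/- arXiv:quant-ph/0004091 — 8 statements merged into one kernel-verified Lean document; each statement's English description precedes it below -/
import Mathlib

section
/- Let σ and w be unit vectors in ℂ^N with ⟨w,σ⟩ = ⟨σ,w⟩ = x for some real 0 < x < 1, and let E > 0 be real. Let H' = E·(|σ⟩⟨σ| + |w⟩⟨w|). Then for every real t, exp(−iH't)·σ = e^{−iEt}·[cos(xEt)·σ − i·sin(xEt)·w]. -/
open scoped InnerProductSpace

/-- The outer product |u⟩⟨v| : the rank-one operator sending φ to ⟨v,φ⟩·u
(inner product conjugate-linear in the first argument). -/
noncomputable def outer {N : ℕ} (u v : EuclideanSpace ℂ (Fin N)) :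
    EuclideanSpace ℂ (Fin N) →L[ℂ] EuclideanSpace ℂ (Fin N) :=
  ContinuousLinearMap.toSpanSingleton ℂ u ∘L (innerSL ℂ v)
lemma outer_apply {N : ℕ} (u v φ : EuclideanSpace ℂ (Fin N)) :
    outer u v φ = ⟪v, φ⟫_ℂ • u := rfl

lemma exp_apply_eigen {N : ℕ} (f : EuclideanSpace ℂ (Fin N) →L[ℂ] EuclideanSpace ℂ (Fin N))
    (v : EuclideanSpace ℂ (Fin N)) (c : ℂ) (h : f v = c • v) :
    NormedSpace.exp f v = Complex.exp c • v := by
  have hpow : ∀ n : ℕ, (f ^ n) v = c ^ n • v := by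
    intro n
    induction n with
    | zero => simp
    | succ n ih =>
      rw [pow_succ, pow_succ, ContinuousLinearMap.mul_apply, h, map_smul, ih, smul_smul,
        mul_comm]
  have hs : Summable (fun n : ℕ => ((n.factorial : ℂ))⁻¹ • f ^ n) :=
    NormedSpace.expSeries_summable' f
  have := (ContinuousLinearMap.apply ℂ (EuclideanSpace ℂ (Fin N)) v).map_tsum hs
  rw [NormedSpace.exp_eq_tsum (𝕂 := ℂ)]
  simp only [ContinuousLinearMap.apply_apply] at this
  rw [this]
  have hsc : Summable (fun n : ℕ => ((n.factorial : ℂ))⁻¹ • c ^ n) :=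
    NormedSpace.expSeries_summable' c
  calc ∑' n : ℕ, ((n.factorial : ℂ))⁻¹ • (f ^ n) v
      = ∑' n : ℕ, (((n.factorial : ℂ))⁻¹ • c ^ n) • v := by
        congr 1; funext n; rw [hpow, smul_smul]; rfl
    _ = (∑' n : ℕ, ((n.factorial : ℂ))⁻¹ • c ^ n) • v := by
        rw [Summable.tsum_smul_const hsc]
    _ = Complex.exp c • v := by
        rw [Complex.exp_eq_exp_ℂ, NormedSpace.exp_eq_tsum (𝕂 := ℂ)]

theorem stmt_2 {N : ℕ} (σ w : EuclideanSpace ℂ (Fin N))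
    (hσ : ‖σ‖ = 1) (hw : ‖w‖ = 1) (x : ℝ) (hx0 : 0 < x) (hx1 : x < 1)
    (hwσ : ⟪w, σ⟫_ℂ = (x : ℂ)) (hσw : ⟪σ, w⟫_ℂ = (x : ℂ))
    (E : ℝ) (hE : 0 < E)
    (H' : EuclideanSpace ℂ (Fin N) →L[ℂ] EuclideanSpace ℂ (Fin N))
    (hH' : H' = (E : ℂ) • (outer σ σ + outer w w)) (t : ℝ) :
    NormedSpace.exp ((-(Complex.I * (t : ℂ))) • H') σ =
      Complex.exp (-(Complex.I * (E : ℂ) * (t : ℂ))) •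
        (((Real.cos (x * E * t) : ℝ) : ℂ) • σ -
          (Complex.I * ((Real.sin (x * E * t) : ℝ) : ℂ)) • w) := by
  have hσσ : ⟪σ, σ⟫_ℂ = 1 := by
    rw [inner_self_eq_norm_sq_to_K, hσ]; norm_num
  have hww : ⟪w, w⟫_ℂ = 1 := by
    rw [inner_self_eq_norm_sq_to_K, hw]; norm_num
  set A : EuclideanSpace ℂ (Fin N) →L[ℂ] EuclideanSpace ℂ (Fin N) :=
    (-(Complex.I * (t : ℂ))) • H' with hA
  have hu : A (σ + w) = (-(Complex.I * t * (E * (1 + x)))) • (σ + w) := by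
    rw [hA, hH']
    simp only [ContinuousLinearMap.smul_apply, ContinuousLinearMap.add_apply, outer_apply,
      inner_add_right, hσσ, hww, hwσ, hσw]
    match_scalars <;> ring
  have hd : A (σ - w) = (-(Complex.I * t * (E * (1 - x)))) • (σ - w) := by
    rw [hA, hH']
    simp only [ContinuousLinearMap.smul_apply, ContinuousLinearMap.add_apply, outer_apply,
      inner_sub_right, hσσ, hww, hwσ, hσw]
    match_scalars <;> ring
  have eu := exp_apply_eigen A (σ + w) _ hu
  have ed := exp_apply_eigen A (σ - w) _ hd
  have hσ2 : σ = (2⁻¹ : ℂ) • ((σ + w) + (σ - w)) := by module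
  calc NormedSpace.exp A σ
      = (2⁻¹ : ℂ) • (NormedSpace.exp A (σ + w) + NormedSpace.exp A (σ - w)) := by
        conv_lhs => rw [hσ2]
        rw [map_smul, map_add]
    _ = (2⁻¹ : ℂ) • (Complex.exp (-(Complex.I * t * (E * (1 + x)))) • (σ + w) +
          Complex.exp (-(Complex.I * t * (E * (1 - x)))) • (σ - w)) := by rw [eu, ed]
    _ = Complex.exp (-(Complex.I * (E : ℂ) * (t : ℂ))) •
        (((Real.cos (x * E * t) : ℝ) : ℂ) • σ -
          (Complex.I * ((Real.sin (x * E * t) : ℝ) : ℂ)) • w) := by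
        have e1 : Complex.exp (-(Complex.I * t * (E * (1 + x)))) =
            Complex.exp (-(Complex.I * E * t)) *
              (Complex.cos (x * E * t : ℝ) - Complex.sin (x * E * t : ℝ) * Complex.I) := by
          have h : -(Complex.I * (t:ℂ) * ((E:ℂ) * (1 + (x:ℂ)))) =
              -(Complex.I * E * t) + ((-(x * E * t) : ℝ) : ℂ) * Complex.I := by
            push_cast; ring
          rw [h, Complex.exp_add, Complex.exp_mul_I]
          push_cast
          simp only [Complex.cos_neg, Complex.sin_neg]
          ring
        have e2 : Complex.exp (-(Complex.I * t * (E * (1 - x)))) =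
            Complex.exp (-(Complex.I * E * t)) *
              (Complex.cos (x * E * t : ℝ) + Complex.sin (x * E * t : ℝ) * Complex.I) := by
          have h : -(Complex.I * (t:ℂ) * ((E:ℂ) * (1 - (x:ℂ)))) =
              -(Complex.I * E * t) + (((x * E * t) : ℝ) : ℂ) * Complex.I := by
            push_cast; ring
          rw [h, Complex.exp_add, Complex.exp_mul_I]
        rw [e1, e2, Complex.ofReal_cos, Complex.ofReal_sin]
        match_scalars <;> ring
end

section
/- Let σ and w be unit vectors in ℂ^N with ⟨w,σ⟩ = ⟨σ,w⟩ = x for some real 0 < x < 1, and let E > 0 be real. Let H' = E·(|σ⟩⟨σ| + |w⟩⟨w|). Then at time t = π/(2Ex), exp(−iH't)·σ = −i·e^{−iπ/(2x)}·w; in particular, exp(−iH't)·σ equals w up to a phase factor of modulus 1. -/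
open scoped InnerProductSpace

lemma exp_apply_eigen_s3 {V : Type*} [NormedAddCommGroup V] [NormedSpace ℂ V]
    [CompleteSpace V] (A : V →L[ℂ] V) (v : V) (c : ℂ) (h : A v = c • v) :
    NormedSpace.exp A v = Complex.exp c • v := by
  have hpow : ∀ n : ℕ, (A ^ n) v = c ^ n • v := by
    intro n
    induction n with
    | zero => simp
    | succ n ih =>
      rw [pow_succ, pow_succ, ContinuousLinearMap.mul_apply, h, map_smul, ih, smul_smul,
        mul_comm]
  have hsum := NormedSpace.expSeries_summable' (𝕂 := ℂ) A
  have := (ContinuousLinearMap.apply ℂ V v).map_tsum hsum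
  rw [NormedSpace.exp_eq_tsum ℂ]
  simp only [ContinuousLinearMap.apply_apply] at this
  rw [this]
  simp only [ContinuousLinearMap.coe_smul', Pi.smul_apply, hpow, smul_smul]
  rw [Summable.tsum_smul_const ?_, Complex.exp_eq_exp_ℂ, NormedSpace.exp_eq_tsum ℂ]
  · simp [smul_eq_mul]
  · exact NormedSpace.expSeries_summable' (𝕂 := ℂ) c |>.congr (by simp [smul_eq_mul])

open scoped InnerProductSpace

theorem stmt_3 {N : ℕ} (σ w : EuclideanSpace ℂ (Fin N))
    (hσ : ‖σ‖ = 1) (hw : ‖w‖ = 1) (x : ℝ) (hx0 : 0 < x) (hx1 : x < 1)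
    (hwσ : ⟪w, σ⟫_ℂ = (x : ℂ)) (hσw : ⟪σ, w⟫_ℂ = (x : ℂ))
    (E : ℝ) (hE : 0 < E)
    (H' : EuclideanSpace ℂ (Fin N) →L[ℂ] EuclideanSpace ℂ (Fin N))
    (hH' : H' = (E : ℂ) • (outer σ σ + outer w w))
    (t : ℝ) (ht : t = Real.pi / (2 * E * x)) :
    NormedSpace.exp ((-(Complex.I * (t : ℂ))) • H') σ =
        (-Complex.I * Complex.exp (-(Complex.I * ((Real.pi / (2 * x) : ℝ) : ℂ)))) • w ∧
      ‖-Complex.I * Complex.exp (-(Complex.I * ((Real.pi / (2 * x) : ℝ) : ℂ)))‖ = 1 := by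
  have hx : x ≠ 0 := hx0.ne'
  have hEne : E ≠ 0 := hE.ne'
  constructor
  · have hσσ : ⟪σ, σ⟫_ℂ = 1 := by
      rw [inner_self_eq_norm_sq_to_K, hσ]; norm_num
    have hww : ⟪w, w⟫_ℂ = 1 := by
      rw [inner_self_eq_norm_sq_to_K, hw]; norm_num
    have hout : ∀ (u v φ : EuclideanSpace ℂ (Fin N)), outer u v φ = ⟪v, φ⟫_ℂ • u := by
      intro u v φ
      simp only [outer, ContinuousLinearMap.comp_apply, ContinuousLinearMap.toSpanSingleton_apply,
        innerSL_apply_apply]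
    set B := (-(Complex.I * (t : ℂ))) • H' with hB
    have h1 : B (σ + w) = (-(Complex.I * ((t * E * (1 + x) : ℝ) : ℂ))) • (σ + w) := by
      simp only [hB, hH', ContinuousLinearMap.smul_apply, ContinuousLinearMap.add_apply,
        hout, inner_add_right, hσσ, hww, hwσ, hσw]
      push_cast
      match_scalars <;> ring
    have h2 : B (σ - w) = (-(Complex.I * ((t * E * (1 - x) : ℝ) : ℂ))) • (σ - w) := by
      simp only [hB, hH', ContinuousLinearMap.smul_apply, ContinuousLinearMap.add_apply,
        hout, inner_sub_right, hσσ, hww, hwσ, hσw]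
      push_cast
      match_scalars <;> ring
    have e1 := exp_apply_eigen_s3 B (σ + w) _ h1
    have e2 := exp_apply_eigen_s3 B (σ - w) _ h2
    have hr1 : t * E * (1 + x) = Real.pi / (2 * x) + Real.pi / 2 := by
      rw [ht]; field_simp
    have hr2 : t * E * (1 - x) = Real.pi / (2 * x) - Real.pi / 2 := by
      rw [ht]; field_simp
    have hexpI : Complex.exp (-(Complex.I * ((Real.pi / 2 : ℝ) : ℂ))) = -Complex.I := by
      have : (-(Complex.I * ((Real.pi / 2 : ℝ) : ℂ))) = ((-(Real.pi / 2) : ℝ) : ℂ) * Complex.I := by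
        push_cast; ring
      rw [this, Complex.exp_mul_I]
      push_cast
      simp [Complex.ofReal_cos, Complex.ofReal_sin, ← Complex.ofReal_cos, ← Complex.ofReal_sin,
        Real.cos_pi_div_two, Real.sin_pi_div_two]
    have hexpI' : Complex.exp (Complex.I * ((Real.pi / 2 : ℝ) : ℂ)) = Complex.I := by
      have : (Complex.I * ((Real.pi / 2 : ℝ) : ℂ)) = ((Real.pi / 2 : ℝ) : ℂ) * Complex.I := by ring
      rw [this, Complex.exp_mul_I]
      simp [← Complex.ofReal_cos, ← Complex.ofReal_sin,
        Real.cos_pi_div_two, Real.sin_pi_div_two]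
    have he1 : Complex.exp (-(Complex.I * ((t * E * (1 + x) : ℝ) : ℂ))) =
        Complex.exp (-(Complex.I * ((Real.pi / (2 * x) : ℝ) : ℂ))) * (-Complex.I) := by
      have harg : -(Complex.I * (((Real.pi / (2 * x) + Real.pi / 2 : ℝ)) : ℂ)) =
          -(Complex.I * ((Real.pi / (2 * x) : ℝ) : ℂ)) + -(Complex.I * ((Real.pi / 2 : ℝ) : ℂ)) := by
        push_cast; ring
      rw [hr1, harg, Complex.exp_add, hexpI]
    have he2 : Complex.exp (-(Complex.I * ((t * E * (1 - x) : ℝ) : ℂ))) =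
        Complex.exp (-(Complex.I * ((Real.pi / (2 * x) : ℝ) : ℂ))) * Complex.I := by
      have harg : -(Complex.I * (((Real.pi / (2 * x) - Real.pi / 2 : ℝ)) : ℂ)) =
          -(Complex.I * ((Real.pi / (2 * x) : ℝ) : ℂ)) + Complex.I * ((Real.pi / 2 : ℝ) : ℂ) := by
        push_cast; ring
      rw [hr2, harg, Complex.exp_add, hexpI']
    have hσdecomp : σ = (2⁻¹ : ℂ) • ((σ + w) + (σ - w)) := by module
    calc NormedSpace.exp B σ = (2⁻¹ : ℂ) • (NormedSpace.exp B (σ + w) + NormedSpace.exp B (σ - w)) := by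
          rw [← map_add, ← map_smul, ← hσdecomp]
      _ = (-Complex.I * Complex.exp (-(Complex.I * ((Real.pi / (2 * x) : ℝ) : ℂ)))) • w := by
          rw [e1, e2, he1, he2]
          match_scalars <;> ring
  · rw [norm_mul, Complex.norm_exp]
    have h0 : (-(Complex.I * ((Real.pi / (2 * x) : ℝ) : ℂ))).re = 0 := by
      simp [Complex.div_im, Complex.div_re]
    rw [h0]
    simp
end

section
/- Let σ and w be unit vectors in ℂ^N with ⟨w,σ⟩ = ⟨σ,w⟩ = x for some real 0 < x < 1, let E > 0 be real, set θ = arccos x and η = E·sin(2θ). Let H = 2iEx·(|w⟩⟨σ| − |σ⟩⟨w|). Then for every real t, exp(−iHt)·σ = (1/sin θ)·[sin(θ − ηt)·σ + sin(ηt)·w]. -/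
open scoped InnerProductSpace

theorem stmt_5 {N : ℕ} (σ w : EuclideanSpace ℂ (Fin N))
    (hσ : ‖σ‖ = 1) (hw : ‖w‖ = 1) (x : ℝ) (hx0 : 0 < x) (hx1 : x < 1)
    (hwσ : ⟪w, σ⟫_ℂ = (x : ℂ)) (hσw : ⟪σ, w⟫_ℂ = (x : ℂ))
    (E : ℝ) (hE : 0 < E) (θ η : ℝ) (hθ : θ = Real.arccos x)
    (hη : η = E * Real.sin (2 * θ))
    (H : EuclideanSpace ℂ (Fin N) →L[ℂ] EuclideanSpace ℂ (Fin N))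
    (hH : H = (2 * Complex.I * (E : ℂ) * (x : ℂ)) • (outer w σ - outer σ w))
    (t : ℝ) :
    NormedSpace.exp ((-(Complex.I * (t : ℂ))) • H) σ =
      (((Real.sin θ)⁻¹ : ℝ) : ℂ) •
        (((Real.sin (θ - η * t) : ℝ) : ℂ) • σ + ((Real.sin (η * t) : ℝ) : ℂ) • w) := by
  -- basic real trigonometry
  set s : ℝ := Real.sin θ with hsdef
  have hx1' : -1 ≤ x := by linarith
  have hx1'' : x ≤ 1 := le_of_lt hx1
  have hcosθ : Real.cos θ = x := by rw [hθ]; exact Real.cos_arccos hx1' hx1''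
  have hs2 : s ^ 2 = 1 - x ^ 2 := by
    have := Real.sin_sq_add_cos_sq θ
    rw [hcosθ] at this; linarith
  have hspos : 0 < s := by
    rw [hsdef, hθ]; rw [Real.sin_arccos]
    exact Real.sqrt_pos.2 (by nlinarith)
  have hsne : (s : ℂ) ≠ 0 := by exact_mod_cast (Complex.ofReal_ne_zero.2 hspos.ne')
  set c : ℝ := 2 * E * x * t with hcdef
  set z : ℝ := η * t with hzdef
  have hz : z = c * s := by
    rw [hzdef, hη, Real.sin_two_mul, hcosθ]; ring
  -- the operator K and its action
  set K : EuclideanSpace ℂ (Fin N) →L[ℂ] EuclideanSpace ℂ (Fin N) :=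
    outer w σ - outer σ w with hKdef
  have hσσ : ⟪σ, σ⟫_ℂ = 1 := by
    rw [inner_self_eq_norm_sq_to_K, hσ]; norm_num
  have hww : ⟪w, w⟫_ℂ = 1 := by
    rw [inner_self_eq_norm_sq_to_K, hw]; norm_num
  have houter : ∀ u v φ : EuclideanSpace ℂ (Fin N), outer u v φ = ⟪v, φ⟫_ℂ • u := by
    intro u v φ; rfl
  have hKσ : K σ = w - (x : ℂ) • σ := by
    rw [hKdef, ContinuousLinearMap.sub_apply, houter, houter, hσσ, hwσ, one_smul]
  have hKw : K w = (x : ℂ) • w - σ := by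
    rw [hKdef, ContinuousLinearMap.sub_apply, houter, houter, hσw, hww, one_smul]
  set A : EuclideanSpace ℂ (Fin N) →L[ℂ] EuclideanSpace ℂ (Fin N) := (c : ℂ) • K with hAdef
  have hA : (-(Complex.I * (t : ℂ))) • H = A := by
    rw [hH, hAdef, smul_smul]
    congr 1
    have : Complex.I * Complex.I = -1 := Complex.I_mul_I
    push_cast [hcdef]
    ring_nf
    rw [Complex.I_sq]
    ring
  set r : ℂ := (c : ℂ) ^ 2 * ((x ^ 2 - 1 : ℝ) : ℂ) with hrdef
  have hKKσ : K (K σ) = ((x ^ 2 - 1 : ℝ) : ℂ) • σ := by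
    rw [hKσ, map_sub, map_smul, hKw, hKσ]
    push_cast
    module
  have hA2σ : A (A σ) = r • σ := by
    rw [hAdef]
    simp only [ContinuousLinearMap.smul_apply, map_smul, hKKσ, smul_smul, hrdef]
    ring_nf
  have hA2Kσ : A (A (K σ)) = r • K σ := by
    have hKKKσ : K (K (K σ)) = ((x ^ 2 - 1 : ℝ) : ℂ) • K σ := by
      rw [hKKσ, map_smul]
    rw [hAdef]
    simp only [ContinuousLinearMap.smul_apply, map_smul, hKKKσ, smul_smul, hrdef]
    ring_nf
  -- powers of A applied to σ
  have hevenK : ∀ n : ℕ, (A ^ (2 * n)) (K σ) = r ^ n • K σ := by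
    intro n
    induction n with
    | zero => simp
    | succ n ih =>
      have h2 : 2 * (n + 1) = 2 * n + 1 + 1 := by ring
      rw [h2, pow_succ, pow_succ, ContinuousLinearMap.mul_apply,
        ContinuousLinearMap.mul_apply]
      calc (A ^ (2 * n)) (A (A (K σ))) = (A ^ (2 * n)) (r • K σ) := by rw [hA2Kσ]
        _ = r • (A ^ (2 * n)) (K σ) := by rw [map_smul]
        _ = r ^ (n + 1) • K σ := by rw [ih, smul_smul, ← pow_succ']
  have heven : ∀ n : ℕ, (A ^ (2 * n)) σ = r ^ n • σ := by
    intro n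
    induction n with
    | zero => simp
    | succ n ih =>
      have h2 : 2 * (n + 1) = 2 * n + 1 + 1 := by ring
      rw [h2, pow_succ, pow_succ, ContinuousLinearMap.mul_apply,
        ContinuousLinearMap.mul_apply]
      calc (A ^ (2 * n)) (A (A σ)) = (A ^ (2 * n)) (r • σ) := by rw [hA2σ]
        _ = r • (A ^ (2 * n)) σ := by rw [map_smul]
        _ = r ^ (n + 1) • σ := by rw [ih, smul_smul, ← pow_succ']
  have hodd : ∀ n : ℕ, (A ^ (2 * n + 1)) σ = ((c : ℂ) * r ^ n) • K σ := by
    intro n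
    rw [pow_succ, ContinuousLinearMap.mul_apply]
    have hAσ : A σ = (c : ℂ) • K σ := by
      rw [hAdef]; simp
    rw [hAσ, map_smul, hevenK, smul_smul, mul_comm]
  -- relation between r and z
  have hrz : r = -((z : ℂ)) ^ 2 := by
    rw [hrdef, hz]
    have : ((x ^ 2 - 1 : ℝ) : ℂ) = -((s : ℂ)) ^ 2 := by
      push_cast
      have : (s : ℂ) ^ 2 = 1 - (x : ℂ) ^ 2 := by exact_mod_cast congrArg (Complex.ofReal) hs2
      rw [this]; ring
    rw [this]
    push_cast
    ring
  -- the even part of the series sums to cos z • σ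
  have hcos : HasSum (fun k : ℕ => ((Nat.factorial (2 * k) : ℂ))⁻¹ • ((A ^ (2 * k)) σ))
      (Complex.cos (z : ℂ) • σ) := by
    have h := (Complex.hasSum_cos (z : ℂ)).smul_const σ
    convert h using 2 with k
    rw [heven, smul_smul, hrz]
    congr 1
    rw [pow_mul, neg_pow]
    field_simp
  -- the odd part sums to (sin z / s) • K σ
  have hsin : HasSum (fun k : ℕ => ((Nat.factorial (2 * k + 1) : ℂ))⁻¹ • ((A ^ (2 * k + 1)) σ))
      ((Complex.sin (z : ℂ) / (s : ℂ)) • K σ) := by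
    have h := ((Complex.hasSum_sin (z : ℂ)).div_const (s : ℂ)).smul_const (K σ)
    convert h using 2 with k
    rw [hodd, smul_smul]
    have hzc : (z : ℂ) = (c : ℂ) * (s : ℂ) := by push_cast [hz]; ring
    congr 1
    have hf : ((Nat.factorial (2 * k + 1) : ℂ)) ≠ 0 := Nat.cast_ne_zero.2 (Nat.factorial_ne_zero _)
    rw [hrz, hzc]
    field_simp
    ring
  -- sum of the exponential series applied to σ
  have hsum : HasSum (fun n : ℕ => ((Nat.factorial n : ℂ))⁻¹ • ((A ^ n) σ)) (NormedSpace.exp A σ) := by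
    have h := (NormedSpace.exp_series_hasSum_exp' (𝕂 := ℂ) A).mapL
      (ContinuousLinearMap.apply ℂ (EuclideanSpace ℂ (Fin N)) σ)
    exact h
  have hexp : NormedSpace.exp A σ
      = Complex.cos (z : ℂ) • σ + (Complex.sin (z : ℂ) / (s : ℂ)) • K σ :=
    hsum.unique (HasSum.even_add_odd hcos hsin)
  -- final assembly
  rw [hA, hexp, hKσ]
  have hsinz : Complex.sin (z : ℂ) = ((Real.sin z : ℝ) : ℂ) := by
    rw [Complex.ofReal_sin]
  have hcosz : Complex.cos (z : ℂ) = ((Real.cos z : ℝ) : ℂ) := by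
    rw [Complex.ofReal_cos]
  have hsinsub : Real.sin (θ - z) = s * Real.cos z - x * Real.sin z := by
    rw [Real.sin_sub, hcosθ]
  rw [hsinz, hcosz, show θ - η * t = θ - z from rfl, hsinsub]
  push_cast
  match_scalars
  · field_simp
    ring
  · field_simp
end

section
/- Let σ and w be unit vectors in ℂ^N with ⟨w,σ⟩ = ⟨σ,w⟩ = x for some real 0 < x < 1, let E > 0 be real, set θ = arccos x and η = E·sin(2θ). Let H = 2iEx·(|w⟩⟨σ| − |σ⟩⟨w|). Then for every real t, exp(−iHt)·w = (1/sin θ)·[−sin(ηt)·σ + sin(θ + ηt)·w]. -/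
open scoped InnerProductSpace

theorem stmt_6 {N : ℕ} (σ w : EuclideanSpace ℂ (Fin N))
    (hσ : ‖σ‖ = 1) (hw : ‖w‖ = 1) (x : ℝ) (hx0 : 0 < x) (hx1 : x < 1)
    (hwσ : ⟪w, σ⟫_ℂ = (x : ℂ)) (hσw : ⟪σ, w⟫_ℂ = (x : ℂ))
    (E : ℝ) (hE : 0 < E) (θ η : ℝ) (hθ : θ = Real.arccos x)
    (hη : η = E * Real.sin (2 * θ))
    (H : EuclideanSpace ℂ (Fin N) →L[ℂ] EuclideanSpace ℂ (Fin N))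
    (hH : H = (2 * Complex.I * (E : ℂ) * (x : ℂ)) • (outer w σ - outer σ w))
    (t : ℝ) :
    NormedSpace.exp ((-(Complex.I * (t : ℂ))) • H) w =
      (((Real.sin θ)⁻¹ : ℝ) : ℂ) •
        ((-(Real.sin (η * t)) : ℝ) • σ + ((Real.sin (θ + η * t) : ℝ) : ℂ) • w) := by
  have hcos : Real.cos θ = x := by rw [hθ]; exact Real.cos_arccos (by linarith) hx1.le
  set s : ℝ := Real.sin θ with hs_def
  have hs : s = Real.sqrt (1 - x ^ 2) := by rw [hs_def, hθ, Real.sin_arccos]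
  have hs_pos : 0 < s := by rw [hs]; apply Real.sqrt_pos.mpr; nlinarith
  have hs_sq : s ^ 2 = 1 - x ^ 2 := by rw [hs]; exact Real.sq_sqrt (by nlinarith)
  have hs_ne : (s : ℂ) ≠ 0 := Complex.ofReal_ne_zero.mpr hs_pos.ne'
  set c : ℝ := 2 * E * x * t with hc_def
  have hcs : c * s = η * t := by
    rw [hη, Real.sin_two_mul, hcos, ← hs_def]; ring
  set K := outer w σ - outer σ w with hK_def
  have houter : ∀ u v φ : EuclideanSpace ℂ (Fin N), outer u v φ = ⟪v, φ⟫_ℂ • u :=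
    fun u v φ => rfl
  have hww : ⟪w, w⟫_ℂ = 1 := by rw [inner_self_eq_norm_sq_to_K, hw]; norm_num
  have hσσ : ⟪σ, σ⟫_ℂ = 1 := by rw [inner_self_eq_norm_sq_to_K, hσ]; norm_num
  have hKw : K w = (x : ℂ) • w - σ := by
    rw [hK_def, ContinuousLinearMap.sub_apply, houter, houter, hσw, hww, one_smul]
  have hKσ : K σ = w - (x : ℂ) • σ := by
    rw [hK_def, ContinuousLinearMap.sub_apply, houter, houter, hwσ, hσσ, one_smul]
  have hKKw : K (K w) = ((x : ℂ) ^ 2 - 1) • w := by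
    rw [hKw, map_sub, map_smul, hKw, hKσ]
    module
  set A := (-(Complex.I * (t : ℂ))) • H with hA_def
  have hA : A = ((c : ℂ)) • K := by
    rw [hA_def, hH, smul_smul, hc_def]
    congr 1
    push_cast
    linear_combination (-2 * (t:ℂ) * (E:ℂ) * (x:ℂ)) * Complex.I_sq
  have hAw : A w = (c : ℂ) • K w := by rw [hA]; rfl
  have hAKw : A (K w) = ((c : ℂ) * ((x : ℂ) ^ 2 - 1)) • w := by
    rw [hA, ContinuousLinearMap.smul_apply, hKKw, smul_smul]
  set μ : ℂ := (c : ℂ) ^ 2 * ((x : ℂ) ^ 2 - 1) with hμ_def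
  have heven : ∀ k : ℕ, (A ^ (2 * k)) w = μ ^ k • w := by
    intro k
    induction k with
    | zero => simp
    | succ k ih =>
      have h2 : 2 * (k + 1) = (2 * k) + 1 + 1 := by ring
      rw [h2, pow_succ, pow_succ, ContinuousLinearMap.mul_apply,
        ContinuousLinearMap.mul_apply, hAw]
      simp only [map_smul]
      rw [hAKw]
      simp only [map_smul]
      rw [ih, smul_smul, smul_smul, pow_succ, hμ_def]
      congr 1
      ring
  have hodd : ∀ k : ℕ, (A ^ (2 * k + 1)) w = (μ ^ k * (c : ℂ)) • K w := by
    intro k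
    rw [pow_succ', ContinuousLinearMap.mul_apply, heven k, map_smul, hAw, smul_smul]
  -- the exponential applied to w as a HasSum
  have hexp := NormedSpace.exp_series_hasSum_exp' (𝕂 := ℂ) A
  have hexpw : HasSum (fun n : ℕ => ((Nat.factorial n : ℂ))⁻¹ • (A ^ n) w)
      (NormedSpace.exp A w) := by
    have := hexp.mapL (ContinuousLinearMap.apply ℂ (EuclideanSpace ℂ (Fin N)) w)
    simpa using this
  set z : ℂ := ((η * t : ℝ) : ℂ) with hz_def
  have hzcs : z = (c : ℂ) * (s : ℂ) := by
    rw [hz_def, ← hcs]; push_cast; ring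
  have hμval : μ = -z ^ 2 := by
    have hsqC : ((s : ℂ)) ^ 2 = 1 - (x : ℂ) ^ 2 := by
      exact_mod_cast congrArg Complex.ofReal hs_sq
    rw [hμ_def, hzcs]
    linear_combination ((c : ℂ) ^ 2) * hsqC
  have hμk : ∀ k : ℕ, μ ^ k = (-1 : ℂ) ^ k * z ^ (2 * k) := by
    intro k
    rw [hμval, neg_pow, pow_mul]
  have heS : HasSum (fun k : ℕ => ((Nat.factorial (2 * k) : ℂ))⁻¹ • (A ^ (2 * k)) w)
      (Complex.cos z • w) := by
    have h := (Complex.hasSum_cos z).smul_const w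
    have hfun : (fun k : ℕ => ((Nat.factorial (2 * k) : ℂ))⁻¹ • (A ^ (2 * k)) w) =
        fun k : ℕ => ((-1 : ℂ) ^ k * z ^ (2 * k) / (Nat.factorial (2 * k) : ℂ)) • w := by
      funext k
      rw [heven k, smul_smul, hμk k]
      congr 1
      rw [div_eq_mul_inv]
      ring
    rw [hfun]
    exact h
  have hoS : HasSum (fun k : ℕ => ((Nat.factorial (2 * k + 1) : ℂ))⁻¹ • (A ^ (2 * k + 1)) w)
      ((Complex.sin z / (s : ℂ)) • K w) := by
    have h := ((Complex.hasSum_sin z).div_const ((s : ℂ))).smul_const (K w)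
    have hfun : (fun k : ℕ => ((Nat.factorial (2 * k + 1) : ℂ))⁻¹ • (A ^ (2 * k + 1)) w) =
        fun k : ℕ => ((-1 : ℂ) ^ k * z ^ (2 * k + 1) / (Nat.factorial (2 * k + 1) : ℂ) / (s : ℂ)) • K w := by
      funext k
      rw [hodd k, smul_smul, hμk k]
      congr 1
      rw [pow_succ, hzcs]
      have hf : ((2 * k + 1).factorial : ℂ) ≠ 0 :=
        Nat.cast_ne_zero.mpr (Nat.factorial_ne_zero _)
      field_simp [hf]
    rw [hfun]
    exact h
  have htot : HasSum (fun n : ℕ => ((Nat.factorial n : ℂ))⁻¹ • (A ^ n) w)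
      (Complex.cos z • w + (Complex.sin z / (s : ℂ)) • K w) :=
    HasSum.even_add_odd heS hoS
  have hval := hexpw.unique htot
  rw [hval, hKw]
  have hcosz : Complex.cos z = ((Real.cos (η * t) : ℝ) : ℂ) := by
    rw [hz_def, Complex.ofReal_cos]
  have hsinz : Complex.sin z = ((Real.sin (η * t) : ℝ) : ℂ) := by
    rw [hz_def, Complex.ofReal_sin]
  have hsin_add : Real.sin (θ + η * t) = s * Real.cos (η * t) + x * Real.sin (η * t) := by
    rw [Real.sin_add, ← hs_def, hcos]
  rw [hcosz, hsinz, hsin_add]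
  rw [RCLike.real_smul_eq_coe_smul (K := ℂ)]
  push_cast
  match_scalars
  · field_simp
    try ring
  · field_simp
    show _ = -((Real.sin (η * t) : ℝ) : ℂ)
    push_cast; ring
end

section
/- Let σ and w be unit vectors in ℂ^N with ⟨w,σ⟩ = ⟨σ,w⟩ = x for some real 0 < x < 1. Define Grover's iterate G = −(I − 2|σ⟩⟨σ|)·(I − 2|w⟩⟨w|), the Hamiltonian H = 2ix·(|w⟩⟨σ| − |σ⟩⟨w|), and the time t₀ = (π − 2·arccos x)/(2x·√(1 − x²)). Then exp(−iHt₀)·σ = G·σ and exp(−iHt₀)·w = G·w. -/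
open scoped InnerProductSpace

set_option maxHeartbeats 1600000

lemma exp_eigen {E : Type*} [NormedAddCommGroup E] [NormedSpace ℂ E] [CompleteSpace E]
    (T : E →L[ℂ] E) (v : E) (c : ℂ) (h : T v = c • v) :
    NormedSpace.exp T v = Complex.exp c • v := by
  have hpow : ∀ n : ℕ, (T ^ n) v = c ^ n • v := by
    intro n
    induction n with
    | zero => simp
    | succ n ih =>
      rw [pow_succ, ContinuousLinearMap.mul_apply, h, map_smul, ih, smul_smul, pow_succ]
      ring_nf
  have hs : Summable fun n : ℕ => ((n.factorial : ℂ))⁻¹ • T ^ n :=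
    NormedSpace.expSeries_summable' T
  have h1 := (ContinuousLinearMap.apply ℂ E v).map_tsum hs
  simp only [ContinuousLinearMap.apply_apply] at h1
  have hsc : Summable fun n : ℕ => ((n.factorial : ℂ))⁻¹ * c ^ n := by
    simpa [smul_eq_mul] using NormedSpace.expSeries_summable' (𝕂 := ℂ) c
  have h2 : ∀ n : ℕ, (((n.factorial : ℂ))⁻¹ • T ^ n) v
      = (((n.factorial : ℂ))⁻¹ * c ^ n) • v := fun n => by
    rw [ContinuousLinearMap.smul_apply, hpow, smul_smul]
  rw [NormedSpace.exp_eq_tsum ℂ, h1, tsum_congr h2, hsc.tsum_smul_const,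
    Complex.exp_eq_exp_ℂ, NormedSpace.exp_eq_tsum ℂ]
  simp [smul_eq_mul]

theorem stmt_10 {N : ℕ} (σ w : EuclideanSpace ℂ (Fin N))
    (hσ : ‖σ‖ = 1) (hw : ‖w‖ = 1) (x : ℝ) (hx0 : 0 < x) (hx1 : x < 1)
    (hwσ : ⟪w, σ⟫_ℂ = (x : ℂ)) (hσw : ⟪σ, w⟫_ℂ = (x : ℂ))
    (G H : EuclideanSpace ℂ (Fin N) →L[ℂ] EuclideanSpace ℂ (Fin N))
    (hG : G = -((1 - (2 : ℂ) • outer σ σ) * (1 - (2 : ℂ) • outer w w)))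
    (hH : H = (2 * Complex.I * (x : ℂ)) • (outer w σ - outer σ w))
    (t₀ : ℝ) (ht₀ : t₀ = (Real.pi - 2 * Real.arccos x) / (2 * x * Real.sqrt (1 - x ^ 2))) :
    NormedSpace.exp ((-(Complex.I * (t₀ : ℂ))) • H) σ = G σ ∧
      NormedSpace.exp ((-(Complex.I * (t₀ : ℂ))) • H) w = G w := by
  set ω : ℝ := Real.sqrt (1 - x ^ 2) with hωdef
  have hω2' : (0:ℝ) ≤ 1 - x ^ 2 := by nlinarith
  have hω2 : ω ^ 2 = 1 - x ^ 2 := Real.sq_sqrt hω2'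
  have hω0 : 0 < ω := Real.sqrt_pos.mpr (by nlinarith)
  set X : ℂ := (x : ℂ) with hXdef
  set W : ℂ := (ω : ℂ) with hWdef
  have hW2 : W ^ 2 = 1 - X ^ 2 := by
    rw [hWdef, hXdef]; exact_mod_cast hω2
  have hσσ : ⟪σ, σ⟫_ℂ = 1 := by
    rw [inner_self_eq_norm_sq_to_K, hσ]; norm_num
  have hww : ⟪w, w⟫_ℂ = 1 := by
    rw [inner_self_eq_norm_sq_to_K, hw]; norm_num
  set s : ℝ := 2 * t₀ * x with hsdef
  set B : EuclideanSpace ℂ (Fin N) →L[ℂ] EuclideanSpace ℂ (Fin N) :=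
    (-(Complex.I * (t₀ : ℂ))) • H with hBdef
  have hB : B = ((s : ℂ)) • (outer w σ - outer σ w) := by
    rw [hBdef, hH, smul_smul, hsdef]
    congr 1
    push_cast
    rw [show (-(Complex.I * (t₀:ℂ))) * (2 * Complex.I * X) =
      (-(Complex.I*Complex.I)) * (2 * (t₀:ℂ) * X) by ring, Complex.I_mul_I]
    ring
  set vp : EuclideanSpace ℂ (Fin N) := σ - (X + Complex.I * W) • w with hvp
  set vm : EuclideanSpace ℂ (Fin N) := σ - (X - Complex.I * W) • w with hvm
  -- eigenvector equations
  have hBp : B vp = ((s : ℂ) * W * Complex.I) • vp := by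
    rw [hB, hvp]
    simp only [ContinuousLinearMap.smul_apply, ContinuousLinearMap.sub_apply, map_sub,
      map_smul, outer_apply, inner_sub_right, inner_smul_right, hσσ, hww, hσw, hwσ]
    match_scalars
    all_goals first
      | ring1
      | linear_combination (-(s:ℂ)) * hW2 + ((s:ℂ) * W^2) * Complex.I_sq
      | linear_combination ((s:ℂ)) * hW2 + (-(s:ℂ) * W^2) * Complex.I_sq
  have hBm : B vm = (-((s : ℂ) * W * Complex.I)) • vm := by
    rw [hB, hvm]
    simp only [ContinuousLinearMap.smul_apply, ContinuousLinearMap.sub_apply, map_sub,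
      map_smul, outer_apply, inner_sub_right, inner_smul_right, hσσ, hww, hσw, hwσ]
    match_scalars
    all_goals first
      | ring1
      | linear_combination (-(s:ℂ)) * hW2 + ((s:ℂ) * W^2) * Complex.I_sq
      | linear_combination ((s:ℂ)) * hW2 + (-(s:ℂ) * W^2) * Complex.I_sq
  -- the angle
  have hx1' : -1 ≤ x := by linarith
  have hx1'' : x ≤ 1 := le_of_lt hx1
  have hsω : s * ω = Real.pi - 2 * Real.arccos x := by
    rw [hsdef, ht₀]
    field_simp
  have hcos : Real.cos (s * ω) = 1 - 2 * x ^ 2 := by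
    rw [hsω, Real.cos_pi_sub, Real.cos_two_mul, Real.cos_arccos hx1' hx1'']
    ring
  have hsin : Real.sin (s * ω) = 2 * ω * x := by
    rw [hsω, Real.sin_pi_sub, Real.sin_two_mul, Real.sin_arccos,
      Real.cos_arccos hx1' hx1'', hωdef]
  have hep : Complex.exp (((s * ω : ℝ) : ℂ) * Complex.I)
      = (1 - 2 * X ^ 2) + (2 * W * X) * Complex.I := by
    rw [Complex.exp_mul_I, ← Complex.ofReal_cos, ← Complex.ofReal_sin, hcos, hsin,
      hXdef, hWdef]
    push_cast
    ring
  have hem : Complex.exp (((-(s * ω) : ℝ) : ℂ) * Complex.I)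
      = (1 - 2 * X ^ 2) - (2 * W * X) * Complex.I := by
    rw [Complex.exp_mul_I, ← Complex.ofReal_cos, ← Complex.ofReal_sin,
      Real.cos_neg, Real.sin_neg, hcos, hsin, hXdef, hWdef]
    push_cast
    ring
  have hcp : (s : ℂ) * W * Complex.I = ((s * ω : ℝ) : ℂ) * Complex.I := by
    rw [hWdef]; push_cast; ring
  have hcm : -((s : ℂ) * W * Complex.I) = ((-(s * ω) : ℝ) : ℂ) * Complex.I := by
    rw [hWdef]; push_cast; ring
  have hexpp : NormedSpace.exp B vp = ((1 - 2 * X ^ 2) + (2 * W * X) * Complex.I) • vp := by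
    rw [exp_eigen B vp _ hBp, hcp, hep]
  have hexpm : NormedSpace.exp B vm = ((1 - 2 * X ^ 2) - (2 * W * X) * Complex.I) • vm := by
    rw [exp_eigen B vm _ hBm, hcm, hem]
  -- G on σ and w
  have hGσ : G σ = ((1:ℂ) - 4 * X ^ 2) • σ + (2 * X) • w := by
    rw [hG]
    simp only [ContinuousLinearMap.neg_apply, ContinuousLinearMap.mul_apply,
      ContinuousLinearMap.sub_apply, ContinuousLinearMap.one_apply,
      ContinuousLinearMap.smul_apply, outer_apply, inner_sub_right,
      inner_smul_right, hσσ, hww, hσw, hwσ, smul_smul]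
    match_scalars <;> ring
  have hGw : G w = w - (2 * X) • σ := by
    rw [hG]
    simp only [ContinuousLinearMap.neg_apply, ContinuousLinearMap.mul_apply,
      ContinuousLinearMap.sub_apply, ContinuousLinearMap.one_apply,
      ContinuousLinearMap.smul_apply, outer_apply, inner_sub_right,
      inner_smul_right, hσσ, hww, hσw, hwσ, smul_smul]
    match_scalars <;> ring
  have hWne : (2 * Complex.I * W) ≠ 0 := by
    simp only [hWdef, mul_ne_zero_iff]
    refine ⟨⟨two_ne_zero, Complex.I_ne_zero⟩, ?_⟩
    exact_mod_cast ne_of_gt hω0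
  have hinj := smul_right_injective (EuclideanSpace ℂ (Fin N)) hWne
  constructor
  · apply hinj
    show (2 * Complex.I * W) • NormedSpace.exp B σ = (2 * Complex.I * W) • (G σ)
    have hcomb : (2 * Complex.I * W) • σ = (X + Complex.I * W) • vm - (X - Complex.I * W) • vp := by
      rw [hvp, hvm]; match_scalars <;> ring
    calc (2 * Complex.I * W) • NormedSpace.exp B σ
        = NormedSpace.exp B ((2 * Complex.I * W) • σ) := (map_smul _ _ _).symm
      _ = (X + Complex.I * W) • NormedSpace.exp B vm
          - (X - Complex.I * W) • NormedSpace.exp B vp := by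
          rw [hcomb, map_sub, map_smul, map_smul]
      _ = (2 * Complex.I * W) • (G σ) := by
          rw [hexpp, hexpm, hGσ, hvp, hvm]
          match_scalars
          all_goals first
            | ring1
            | linear_combination (4 * Complex.I * W * X) * hW2 + (-(4:ℂ) * X * Complex.I * W^3) * Complex.I_sq
  · apply hinj
    show (2 * Complex.I * W) • NormedSpace.exp B w = (2 * Complex.I * W) • (G w)
    have hcomb : (2 * Complex.I * W) • w = vm - vp := by
      rw [hvp, hvm]; match_scalars <;> ring
    calc (2 * Complex.I * W) • NormedSpace.exp B w
        = NormedSpace.exp B ((2 * Complex.I * W) • w) := (map_smul _ _ _).symm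
      _ = NormedSpace.exp B vm - NormedSpace.exp B vp := by
          rw [hcomb, map_sub]
      _ = (2 * Complex.I * W) • (G w) := by
          rw [hexpp, hexpm, hGw, hvp, hvm]
          match_scalars
          all_goals first
            | ring1
            | linear_combination (-(2:ℂ) * Complex.I * W) * hW2
            | linear_combination (2 * Complex.I * W) * hW2
end

section
/- Let σ and w be unit vectors in ℂ^N with ⟨w,σ⟩ = ⟨σ,w⟩ = x for some real 0 < x < 1. Define Grover's iterate G = −(I − 2|σ⟩⟨σ|)·(I − 2|w⟩⟨w|), the Hamiltonian H = 2ix·(|w⟩⟨σ| − |σ⟩⟨w|), and the time t₀ = (π − 2·arccos x)/(2x·√(1 − x²)). Let S be the two-dimensional subspace spanned by σ and w, and let P be the orthogonal projection onto the orthogonal complement of S. Then exp(−iHt₀) = G + 2P as operators on all of ℂ^N. -/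
open scoped InnerProductSpace

lemma outer_mul {N : ℕ} (u v a b : EuclideanSpace ℂ (Fin N)) :
    outer u v * outer a b = ⟪v, a⟫_ℂ • outer u b := by
  ext φ
  simp only [ContinuousLinearMap.mul_apply, outer_apply, ContinuousLinearMap.smul_apply,
    inner_smul_right, smul_smul]
  ring_nf

/-- exponential of a scalar multiple of an idempotent -/
lemma exp_smul_idem {𝔸 : Type*} [NormedRing 𝔸] [NormedAlgebra ℂ 𝔸] [CompleteSpace 𝔸]
    (c : ℂ) (Q : 𝔸) (hQ : Q * Q = Q) :
    NormedSpace.exp (c • Q) = 1 + (Complex.exp c - 1) • Q := by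
  have hpow : ∀ n : ℕ, Q ^ (n + 1) = Q := by
    intro n
    induction n with
    | zero => simp
    | succ k ih => rw [pow_succ, ih, hQ]
  have h1 : HasSum (fun n : ℕ => (Nat.factorial n : ℂ)⁻¹ • c ^ n) (NormedSpace.exp c) := by
    simpa using NormedSpace.exp_series_hasSum_exp' (𝕂 := ℂ) c
  have h2 := h1.smul_const Q
  have h3 := h2.update 0 1
  have hfun : Function.update (fun n : ℕ => ((Nat.factorial n : ℂ)⁻¹ • c ^ n) • Q) 0 1
      = fun n : ℕ => (Nat.factorial n : ℂ)⁻¹ • (c • Q) ^ n := by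
    funext n
    cases n with
    | zero => simp
    | succ k =>
      rw [Function.update_of_ne (Nat.succ_ne_zero k)]
      simp [smul_pow, hpow, smul_smul]
  rw [hfun] at h3
  have hexp : NormedSpace.exp (c • Q) = 1 - ((Nat.factorial 0 : ℂ)⁻¹ • c ^ 0) • Q + NormedSpace.exp c • Q := by
    rw [NormedSpace.exp_eq_tsum ℂ]
    exact h3.tsum_eq
  rw [hexp, ← Complex.exp_eq_exp_ℂ]
  simp only [Nat.factorial_zero, Nat.cast_one, inv_one, pow_zero, one_smul, sub_smul]
  abel

set_option maxHeartbeats 1000000 in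
set_option synthInstance.maxHeartbeats 400000 in
theorem stmt_11 {N : ℕ} (σ w : EuclideanSpace ℂ (Fin N))
    (hσ : ‖σ‖ = 1) (hw : ‖w‖ = 1) (x : ℝ) (hx0 : 0 < x) (hx1 : x < 1)
    (hwσ : ⟪w, σ⟫_ℂ = (x : ℂ)) (hσw : ⟪σ, w⟫_ℂ = (x : ℂ))
    (G H : EuclideanSpace ℂ (Fin N) →L[ℂ] EuclideanSpace ℂ (Fin N))
    (hG : G = -((1 - (2 : ℂ) • outer σ σ) * (1 - (2 : ℂ) • outer w w)))
    (hH : H = (2 * Complex.I * (x : ℂ)) • (outer w σ - outer σ w))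
    (t₀ : ℝ) (ht₀ : t₀ = (Real.pi - 2 * Real.arccos x) / (2 * x * Real.sqrt (1 - x ^ 2)))
    (S : Submodule ℂ (EuclideanSpace ℂ (Fin N))) (hS : S = Submodule.span ℂ {σ, w})
    (P : EuclideanSpace ℂ (Fin N) →L[ℂ] EuclideanSpace ℂ (Fin N))
    (hP : P = (Sᗮ).subtypeL ∘L Submodule.orthogonalProjectionOnto Sᗮ) :
    NormedSpace.exp ((-(Complex.I * (t₀ : ℂ))) • H) = G + (2 : ℂ) • P := by
  have hx1l : -1 ≤ x := by linarith
  have hx1r : x ≤ 1 := le_of_lt hx1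
  have hm : (0:ℝ) < 1 - x^2 := by nlinarith
  set μ : ℝ := Real.sqrt (1 - x^2) with hμdef
  have hμ0 : 0 < μ := Real.sqrt_pos.mpr hm
  have hμ2 : μ^2 = 1 - x^2 := Real.sq_sqrt hm.le
  set c : ℂ := (x:ℂ) with hcdef
  have hμc : ((μ:ℂ))^2 = 1 - c^2 := by
    rw [← Complex.ofReal_pow, hμ2]; push_cast; ring
  have hμc0 : ((μ:ℂ)) ≠ 0 := by exact_mod_cast hμ0.ne'
  have hc2ne : (1:ℂ) - c^2 ≠ 0 := by rw [← hμc]; exact pow_ne_zero 2 hμc0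
  have hσσ : ⟪σ, σ⟫_ℂ = 1 := by rw [inner_self_eq_norm_sq_to_K, hσ]; norm_num
  have hww : ⟪w, w⟫_ℂ = 1 := by rw [inner_self_eq_norm_sq_to_K, hw]; norm_num
  obtain ⟨A, hAdef⟩ : ∃ A', A' = outer w σ - outer σ w := ⟨_, rfl⟩
  -- powers of A
  have hA2 : A * A = c • outer w σ + c • outer σ w - outer w w - outer σ σ := by
    rw [hAdef]
    simp only [sub_mul, mul_sub, outer_mul, hσσ, hww, hσw, hwσ, one_smul]
    module
  have hA3 : A * A * A = (-((μ:ℂ))^2) • A := by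
    rw [show (-((μ:ℂ))^2 : ℂ) = -(1 - c^2) by rw [hμc]]
    rw [hA2, hAdef]
    simp only [sub_mul, add_mul, mul_sub, mul_add, smul_mul_assoc, mul_smul_comm,
      smul_sub, smul_add, smul_smul, outer_mul, hσσ, hww, hσw, hwσ, one_smul]
    match_scalars <;> ring
  -- normalized operator D
  obtain ⟨D, hDdef⟩ : ∃ D', D' = ((μ:ℂ))⁻¹ • A := ⟨_, rfl⟩
  have hAD : A = ((μ:ℂ)) • D := by
    rw [hDdef, smul_smul, mul_inv_cancel₀ hμc0, one_smul]
  have hD3 : D * D * D = -D := by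
    rw [hDdef]
    simp only [smul_mul_smul_comm, smul_mul_assoc, mul_smul_comm, smul_smul]
    rw [hA3, smul_smul]
    match_scalars
    field_simp
  have hD3' : D * (D * D) = -D := by rw [← mul_assoc]; exact hD3
  have hD4 : (D * D) * (D * D) = -(D * D) := by
    rw [← mul_assoc, hD3]; exact neg_mul D D
  -- spectral idempotents
  obtain ⟨Qp, hQpdef⟩ : ∃ Q', Q' = (-(1/2 : ℂ)) • (D * D) + (-(Complex.I/2)) • D := ⟨_, rfl⟩
  obtain ⟨Qm, hQmdef⟩ : ∃ Q', Q' = (-(1/2 : ℂ)) • (D * D) - (-(Complex.I/2)) • D := ⟨_, rfl⟩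
  have hQpQp : Qp * Qp = Qp := by
    rw [hQpdef]
    simp only [add_mul, mul_add, smul_mul_assoc, mul_smul_comm, hD3, hD3', hD4]
    match_scalars
    · linear_combination (1/4 : ℂ) * Complex.I_sq
    · ring
  have hQmQm : Qm * Qm = Qm := by
    rw [hQmdef]
    simp only [sub_mul, mul_sub, smul_mul_assoc, mul_smul_comm, hD3, hD3', hD4]
    match_scalars
    · linear_combination (1/4 : ℂ) * Complex.I_sq
    · ring
  have hQpQm : Qp * Qm = 0 := by
    rw [hQpdef, hQmdef]
    simp only [add_mul, mul_sub, smul_mul_assoc, mul_smul_comm, hD3, hD3', hD4]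
    rw [show (0 : EuclideanSpace ℂ (Fin N) →L[ℂ] EuclideanSpace ℂ (Fin N))
        = (0:ℂ) • (D*D) + (0:ℂ) • D by module]
    match_scalars
    · linear_combination (-(1/4) : ℂ) * Complex.I_sq
    · ring
  have hQmQp : Qm * Qp = 0 := by
    rw [hQpdef, hQmdef]
    simp only [sub_mul, mul_add, smul_mul_assoc, mul_smul_comm, hD3, hD3', hD4]
    rw [show (0 : EuclideanSpace ℂ (Fin N) →L[ℂ] EuclideanSpace ℂ (Fin N))
        = (0:ℂ) • (D*D) + (0:ℂ) • D by module]
    match_scalars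
    · linear_combination (-(1/4) : ℂ) * Complex.I_sq
    · ring
  -- the angle
  set θ : ℝ := Real.pi - 2 * Real.arccos x with hθdef
  have hcosθ : Real.cos θ = 1 - 2*x^2 := by
    rw [hθdef, Real.cos_pi_sub, Real.cos_two_mul, Real.cos_arccos hx1l hx1r]; ring
  have hsinθ : Real.sin θ = 2*x*μ := by
    rw [hθdef, Real.sin_pi_sub, Real.sin_two_mul, Real.sin_arccos,
      Real.cos_arccos hx1l hx1r, hμdef]; ring
  have ht₀θ : (t₀:ℂ) * (2 * c * (μ:ℂ)) = ((θ:ℝ):ℂ) := by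
    have h0 : t₀ * (2 * x * μ) = θ := by
      rw [ht₀, hθdef]; field_simp
    calc (t₀:ℂ) * (2 * c * (μ:ℂ)) = ((t₀ * (2 * x * μ) : ℝ) : ℂ) := by push_cast [hcdef]; ring
    _ = ((θ:ℝ):ℂ) := by rw [h0]
  -- exponent argument decomposition
  have harg : (-(Complex.I * (t₀:ℂ))) • H
      = (Complex.I * ((θ:ℝ):ℂ)) • Qp + (-(Complex.I * ((θ:ℝ):ℂ))) • Qm := by
    rw [hH, ← hAdef, hAD, hQpdef, hQmdef, smul_smul, smul_smul]
    match_scalars <;>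
      first
        | ring1
        | linear_combination (-Complex.I^2) * ht₀θ
  -- exponential values
  have he1 : Complex.exp (Complex.I * ((θ:ℝ):ℂ)) = ((1:ℂ) - 2*c^2) + (2*c*(μ:ℂ))*Complex.I := by
    rw [mul_comm, Complex.exp_mul_I, ← Complex.ofReal_cos, ← Complex.ofReal_sin,
      hcosθ, hsinθ, hcdef]
    push_cast; ring
  have he2 : Complex.exp (-(Complex.I * ((θ:ℝ):ℂ))) = ((1:ℂ) - 2*c^2) - (2*c*(μ:ℂ))*Complex.I := by
    rw [show -(Complex.I * ((θ:ℝ):ℂ)) = ((-θ:ℝ):ℂ) * Complex.I by push_cast; ring,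
      Complex.exp_mul_I, ← Complex.ofReal_cos, ← Complex.ofReal_sin]
    rw [Real.cos_neg, Real.sin_neg, hcosθ, hsinθ, hcdef]
    push_cast; ring
  -- the projection formula
  obtain ⟨Pi, hPidef⟩ : ∃ Pi' : EuclideanSpace ℂ (Fin N) →L[ℂ] EuclideanSpace ℂ (Fin N),
    Pi' = outer σ σ + ((1 - c^2)⁻¹) • (outer w w - c • outer σ w - c • outer w σ + (c^2) • outer σ σ)
    := ⟨_, rfl⟩
  have hσS : σ ∈ S := by rw [hS]; exact Submodule.subset_span (Set.mem_insert _ _)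
  have hwS : w ∈ S := by
    rw [hS]; exact Submodule.subset_span (Set.mem_insert_of_mem _ rfl)
  have hPiS : ∀ φ, Pi φ ∈ S := by
    intro φ
    have hrep : Pi φ = (⟪σ,φ⟫_ℂ + (1-c^2)⁻¹ * (c^2 * ⟪σ,φ⟫_ℂ - c * ⟪w,φ⟫_ℂ)) • σ
        + ((1-c^2)⁻¹ * (⟪w,φ⟫_ℂ - c * ⟪σ,φ⟫_ℂ)) • w := by
      simp only [hPidef, ContinuousLinearMap.add_apply, ContinuousLinearMap.smul_apply,
        ContinuousLinearMap.sub_apply, outer_apply]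
      match_scalars <;> ring
    rw [hrep]
    exact S.add_mem (S.smul_mem _ hσS) (S.smul_mem _ hwS)
  have hperp : ∀ φ, φ - Pi φ ∈ Sᗮ := by
    intro φ
    rw [Submodule.mem_orthogonal]
    intro u hu
    rw [hS] at hu
    induction hu using Submodule.span_induction with
    | mem y hy =>
      rcases hy with hy | hy
      · subst hy
        simp only [inner_sub_right, hPidef, ContinuousLinearMap.add_apply,
          ContinuousLinearMap.smul_apply, ContinuousLinearMap.sub_apply, outer_apply,
          inner_add_right, inner_smul_right, hσσ, hσw]
        field_simp
        ring
      · rw [Set.mem_singleton_iff] at hy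
        subst hy
        simp only [inner_sub_right, hPidef, ContinuousLinearMap.add_apply,
          ContinuousLinearMap.smul_apply, ContinuousLinearMap.sub_apply, outer_apply,
          inner_add_right, inner_smul_right, hww, hwσ]
        field_simp
        ring
    | zero => simp
    | add a b _ _ iha ihb => rw [inner_add_left, iha, ihb]; ring
    | smul r a _ iha => rw [inner_smul_left, iha]; ring
  have hPeq : P = 1 - Pi := by
    rw [hP]
    refine ContinuousLinearMap.ext fun φ => ?_
    simp only [ContinuousLinearMap.comp_apply, Submodule.subtypeL_apply,
      ContinuousLinearMap.sub_apply, ContinuousLinearMap.one_apply]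
    refine Submodule.eq_starProjection_of_mem_orthogonal (K := Sᗮ) (hperp φ) ?_
    simpa using S.le_orthogonal_orthogonal (hPiS φ)
  -- assemble
  have hcomm : Commute ((Complex.I * ((θ:ℝ):ℂ)) • Qp) ((-(Complex.I * ((θ:ℝ):ℂ))) • Qm) := by
    show _ = _
    rw [smul_mul_smul_comm, smul_mul_smul_comm, hQpQm, hQmQp]
    simp
  rw [harg, NormedSpace.exp_add_of_commute_of_mem_ball (𝕂 := ℂ) hcomm
    (by simp [NormedSpace.expSeries_radius_eq_top]) (by simp [NormedSpace.expSeries_radius_eq_top]), exp_smul_idem _ _ hQpQp,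
    exp_smul_idem _ _ hQmQm, he1, he2]
  rw [add_mul, mul_add, mul_add, one_mul, mul_one, smul_mul_smul_comm, hQpQm]
  simp only [smul_zero, one_mul]
  rw [hG, hPeq, hQpdef, hQmdef, hDdef]
  rw [show ((1 : EuclideanSpace ℂ (Fin N) →L[ℂ] EuclideanSpace ℂ (Fin N))
        - (2:ℂ) • outer σ σ) * (1 - (2:ℂ) • outer w w)
      = 1 - (2:ℂ) • outer w w - (2:ℂ) • outer σ σ + ((2:ℂ)*(2:ℂ)*c) • outer σ w by
    simp only [mul_sub, sub_mul, one_mul, mul_one, smul_mul_smul_comm, outer_mul, hσw,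
      smul_smul]
    module]
  rw [hPidef]
  simp only [smul_mul_smul_comm, smul_smul, smul_sub, smul_add, mul_smul_comm,
    smul_mul_assoc, one_mul, mul_one, add_zero]
  rw [hA2, hAdef]
  match_scalars
  · norm_num
  · field_simp
    ring_nf
    rw [Complex.I_sq]
    ring_nf
    linear_combination (-4*c^3) * hμc
  · field_simp
    ring_nf
    rw [Complex.I_sq]
    ring_nf
    linear_combination (-4*c^3) * hμc
  · field_simp
    ring_nf
    linear_combination (4*c^2) * hμc
  · field_simp
    ring_nf
    linear_combination (4*c^2) * hμc
end

section
/- There exist constants C > 0 and δ > 0 such that the following holds: for every N, every pair of unit vectors σ, w in ℂ^N with ⟨w,σ⟩ = ⟨σ,w⟩ = x for some real x with 0 < x < δ, letting H = 2ix·(|w⟩⟨σ| − |σ⟩⟨w|) and t₀ = (π − 2·arccos x)/(2x·√(1 − x²)), one has ‖exp(−iHt₀) − exp(−iH)‖ ≤ C·x³ in operator norm. -/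
set_option maxHeartbeats 1000000

set_option maxHeartbeats 1000000 in
open NormedSpace in
lemma my_norm_exp_le {E : Type*} [NormedAddCommGroup E] [NormedSpace ℂ E] [CompleteSpace E]
    (A : E →L[ℂ] E) : ‖exp A‖ ≤ Real.exp ‖A‖ := by
  rw [exp_eq_tsum ℂ]
  have hpow : ∀ n : ℕ, ‖A ^ n‖ ≤ ‖A‖ ^ n := by
    intro n
    rcases Nat.eq_zero_or_pos n with h | h
    · subst h; simp only [pow_zero]; exact ContinuousLinearMap.norm_id_le
    · exact norm_pow_le' A h
  calc ‖(∑' (n : ℕ), ((n.factorial : ℂ)⁻¹) • A ^ n : E →L[ℂ] E)‖ ≤ ∑' (n : ℕ), ‖((n.factorial : ℂ)⁻¹) • A ^ n‖ :=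
        norm_tsum_le_tsum_norm (norm_expSeries_summable' A)
    _ ≤ ∑' (n : ℕ), ‖A‖ ^ n / n.factorial := by
        refine Summable.tsum_le_tsum (fun n => ?_) (norm_expSeries_summable' A)
          (Real.summable_pow_div_factorial ‖A‖)
        rw [norm_smul ((n.factorial : ℂ))⁻¹ (A ^ n), norm_inv, Complex.norm_natCast,
          div_eq_inv_mul]
        exact mul_le_mul_of_nonneg_left (hpow n) (by positivity)
    _ = Real.exp ‖A‖ := by rw [Real.exp_eq_exp_ℝ, exp_eq_tsum_div]

set_option maxHeartbeats 1000000 in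
open NormedSpace in
lemma my_norm_exp_sub_one_le {E : Type*} [NormedAddCommGroup E] [NormedSpace ℂ E]
    [CompleteSpace E] (A : E →L[ℂ] E) : ‖exp A - 1‖ ≤ ‖A‖ * Real.exp ‖A‖ := by
  have hpow : ∀ n : ℕ, ‖A ^ n‖ ≤ ‖A‖ ^ n := by
    intro n
    rcases Nat.eq_zero_or_pos n with h | h
    · subst h; simp only [pow_zero]; exact ContinuousLinearMap.norm_id_le
    · exact norm_pow_le' A h
  set f : ℕ → (E →L[ℂ] E) := fun n => ((n.factorial : ℂ))⁻¹ • A ^ n with hf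
  have hsf : Summable f := expSeries_summable' A
  have hsn : Summable fun n => ‖f n‖ := norm_expSeries_summable' A
  have hsn1 : Summable fun n => ‖f (n + 1)‖ := (summable_nat_add_iff 1).mpr hsn
  have he : exp A = ∑' (n : ℕ), f n := congrFun (exp_eq_tsum ℂ) A
  have hkey : exp A - 1 = ∑' (n : ℕ), f (n + 1) := by
    rw [he, Summable.tsum_eq_zero_add hsf]
    simp [hf]
  rw [hkey]
  have hterm : ∀ n : ℕ, ‖f (n + 1)‖ ≤ ‖A‖ * (‖A‖ ^ n / n.factorial) := by
    intro n
    have h1 : ‖f (n + 1)‖ ≤ ‖A‖ ^ (n + 1) / (n + 1).factorial := by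
      rw [hf]
      simp only
      rw [norm_smul (((n + 1).factorial : ℂ))⁻¹ (A ^ (n + 1)), norm_inv,
        Complex.norm_natCast, div_eq_inv_mul]
      exact mul_le_mul_of_nonneg_left (hpow (n + 1)) (by positivity)
    refine h1.trans ?_
    rw [← mul_div_assoc, ← pow_succ']
    gcongr <;> first | positivity | exact Nat.le_succ n
  calc ‖(∑' (n : ℕ), f (n + 1) : E →L[ℂ] E)‖ ≤ ∑' (n : ℕ), ‖f (n + 1)‖ :=
        norm_tsum_le_tsum_norm hsn1
    _ ≤ ∑' (n : ℕ), ‖A‖ * (‖A‖ ^ n / n.factorial) :=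
        Summable.tsum_le_tsum hterm hsn1 ((Real.summable_pow_div_factorial ‖A‖).mul_left ‖A‖)
    _ = ‖A‖ * Real.exp ‖A‖ := by
        rw [tsum_mul_left, Real.exp_eq_exp_ℝ, exp_eq_tsum_div]

lemma my_arctan_le_self {y : ℝ} (hy : 0 ≤ y) : Real.arctan y ≤ y := by
  rcases eq_or_lt_of_le hy with h | h
  · simp [← h]
  · have h1 : 0 ≤ Real.arctan y := by rw [← Real.arctan_zero]; exact Real.arctan_strictMono.monotone hy
    have h2 := Real.le_tan h1 (Real.arctan_lt_pi_div_two y)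
    rwa [Real.tan_arctan] at h2



open scoped InnerProductSpace

theorem stmt_17 :
    ∃ C > (0 : ℝ), ∃ δ > (0 : ℝ), ∀ (N : ℕ) (σ w : EuclideanSpace ℂ (Fin N)) (x : ℝ),
      ‖σ‖ = 1 → ‖w‖ = 1 → 0 < x → x < δ →
      ⟪w, σ⟫_ℂ = (x : ℂ) → ⟪σ, w⟫_ℂ = (x : ℂ) →
      ∀ H : EuclideanSpace ℂ (Fin N) →L[ℂ] EuclideanSpace ℂ (Fin N),
        H = (2 * Complex.I * (x : ℂ)) • (outer w σ - outer σ w) →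
      ∀ t₀ : ℝ, t₀ = (Real.pi - 2 * Real.arccos x) / (2 * x * Real.sqrt (1 - x ^ 2)) →
      ‖NormedSpace.exp ((-(Complex.I * (t₀ : ℂ))) • H)
          - NormedSpace.exp ((-Complex.I) • H)‖ ≤ C * x ^ 3 := by
  refine ⟨120, by norm_num, 1/2, by norm_num, ?_⟩
  intro N σ w x hσ hw hx hxδ hwσ hσw H hH t₀ ht₀
  have hx1 : x < 1 := by linarith
  have hxhalf : x ≤ 1/2 := le_of_lt hxδ
  -- norm of H
  have houter : ∀ u v : EuclideanSpace ℂ (Fin N), ‖outer u v‖ ≤ ‖u‖ * ‖v‖ := by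
    intro u v
    refine (ContinuousLinearMap.opNorm_comp_le _ _).trans ?_
    rw [ContinuousLinearMap.norm_toSpanSingleton, innerSL_apply_norm]
  have hHnorm : ‖H‖ ≤ 4 * x := by
    rw [hH, norm_smul (2 * Complex.I * (x : ℂ)) (outer w σ - outer σ w)]
    have h1 : ‖outer w σ - outer σ w‖ ≤ 2 := by
      refine (norm_sub_le _ _).trans ?_
      have h2 := houter w σ
      have h3 := houter σ w
      rw [hσ, hw] at h2 h3
      linarith
    have h4 : ‖(2 * Complex.I * (x : ℂ))‖ = 2 * x := by
      rw [norm_mul, norm_mul, Complex.norm_I, Complex.norm_ofNat, Complex.norm_real,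
        Real.norm_eq_abs, abs_of_pos hx]
      ring
    rw [h4]
    nlinarith
  -- bounds on t₀
  have hs0 : (0:ℝ) < 1 - x ^ 2 := by nlinarith
  set s := Real.sqrt (1 - x ^ 2) with hsdef
  have hs : 0 < s := Real.sqrt_pos.mpr hs0
  have hs1 : s ≤ 1 := by
    rw [hsdef]
    exact Real.sqrt_le_one.mpr (by nlinarith)
  have hssq : s ^ 2 = 1 - x ^ 2 := Real.sq_sqrt hs0.le
  have harcsin : t₀ = Real.arcsin x / (x * s) := by
    rw [ht₀, Real.arccos_eq_pi_div_two_sub_arcsin]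
    rw [show Real.pi - 2 * (Real.pi / 2 - Real.arcsin x) = 2 * Real.arcsin x by ring]
    rw [show 2 * x * s = 2 * (x * s) by ring, mul_div_mul_left _ _ (by norm_num : (2:ℝ) ≠ 0)]
  have hxle : x ≤ Real.arcsin x := by
    have h5 := Real.sin_le (Real.arcsin_nonneg.mpr hx.le)
    rwa [Real.sin_arcsin (by linarith) hx1.le] at h5
  have ht1 : 1 ≤ t₀ := by
    rw [harcsin, le_div_iff₀ (by positivity)]
    nlinarith
  have harcle : Real.arcsin x ≤ x / s := by
    rw [Real.arcsin_eq_arctan ⟨by linarith, hx1⟩]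
    exact my_arctan_le_self (by positivity)
  have ht2 : t₀ ≤ 1 / (1 - x ^ 2) := by
    rw [harcsin]
    have h6 : Real.arcsin x / (x * s) ≤ (x / s) / (x * s) := by
      gcongr
    refine h6.trans (le_of_eq ?_)
    rw [← hssq]
    field_simp
  have htd : t₀ - 1 ≤ (4/3) * x ^ 2 := by
    have h7 : 1 / (1 - x ^ 2) ≤ 1 + (4/3) * x ^ 2 := by
      rw [div_le_iff₀ hs0]
      have hx2 : x ^ 2 ≤ 1/4 := by nlinarith
      nlinarith [sq_nonneg x, sq_nonneg (x ^ 2)]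
    linarith
  -- operator estimates
  set B : EuclideanSpace ℂ (Fin N) →L[ℂ] EuclideanSpace ℂ (Fin N) := (-Complex.I) • H with hBdef
  set D : EuclideanSpace ℂ (Fin N) →L[ℂ] EuclideanSpace ℂ (Fin N) :=
    ((t₀ : ℂ) - 1) • B with hDdef
  have hA : (-(Complex.I * (t₀ : ℂ))) • H = B + D := by
    rw [hDdef, hBdef, smul_smul ((t₀ : ℂ) - 1) (-Complex.I) H,
      ← add_smul (-Complex.I) (((t₀ : ℂ) - 1) * -Complex.I) H]
    congr 1
    ring
  have hcomm : Commute B D := (Commute.refl B).smul_right _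
  have hBnorm : ‖B‖ ≤ 4 * x := by
    rw [hBdef, norm_smul (-Complex.I) H, norm_neg, Complex.norm_I, one_mul]
    exact hHnorm
  have hDnorm : ‖D‖ ≤ (16/3) * x ^ 3 := by
    rw [hDdef, norm_smul ((t₀ : ℂ) - 1) B]
    have h8 : ‖(t₀ : ℂ) - 1‖ = t₀ - 1 := by
      rw [show (t₀ : ℂ) - 1 = ((t₀ - 1 : ℝ) : ℂ) by push_cast; ring, Complex.norm_real,
        Real.norm_eq_abs, abs_of_nonneg (by linarith)]
    rw [h8]
    have h9 : (0:ℝ) ≤ t₀ - 1 := by linarith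
    nlinarith [norm_nonneg B]
  have hexp : NormedSpace.exp ((-(Complex.I * (t₀ : ℂ))) • H)
      = NormedSpace.exp B * NormedSpace.exp D := by
    rw [hA]
    letI := NormedAlgebra.restrictScalars ℚ ℂ (EuclideanSpace ℂ (Fin N) →L[ℂ] EuclideanSpace ℂ (Fin N))
    exact NormedSpace.exp_add_of_commute hcomm
  rw [hexp, show NormedSpace.exp B * NormedSpace.exp D - NormedSpace.exp ((-Complex.I) • H)
      = NormedSpace.exp B * (NormedSpace.exp D - 1) by rw [mul_sub, mul_one, hBdef]]
  have hB2 : ‖B‖ ≤ 2 := by linarith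
  have hD23 : ‖D‖ ≤ 2/3 := by nlinarith
  calc ‖NormedSpace.exp B * (NormedSpace.exp D - 1)‖
      ≤ ‖NormedSpace.exp B‖ * ‖NormedSpace.exp D - 1‖ := norm_mul_le _ _
    _ ≤ Real.exp ‖B‖ * (‖D‖ * Real.exp ‖D‖) :=
        mul_le_mul (my_norm_exp_le B) (my_norm_exp_sub_one_le D) (norm_nonneg _)
          (Real.exp_pos _).le
    _ ≤ Real.exp 2 * ((16/3) * x ^ 3 * Real.exp (2/3)) := by
        gcongr <;> first | exact hB2 | exact hDnorm | exact hD23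
    _ = (Real.exp 2 * Real.exp (2/3)) * ((16/3) * x ^ 3) := by ring
    _ = Real.exp (8/3) * ((16/3) * x ^ 3) := by rw [← Real.exp_add]; norm_num
    _ ≤ 21 * ((16/3) * x ^ 3) := by
        have he : Real.exp (8/3) ≤ 21 := by
          have h := Real.exp_one_lt_d9
          calc Real.exp (8/3) ≤ Real.exp 3 := Real.exp_le_exp.mpr (by norm_num)
            _ = Real.exp 1 ^ 3 := by
                rw [← Real.exp_nat_mul]; norm_num
            _ ≤ 2.7182818286 ^ 3 :=
                pow_le_pow_left₀ (Real.exp_pos 1).le h.le 3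
            _ ≤ 21 := by norm_num
        have hx3 : (0:ℝ) ≤ (16/3) * x ^ 3 := by positivity
        exact mul_le_mul_of_nonneg_right he hx3
    _ ≤ 120 * x ^ 3 := by nlinarith [pow_pos hx 3]
end

section
/- There exists a constant C > 0 such that the following holds: for every N ≥ 2, every pair of unit vectors σ, w in ℂ^N with ⟨w,σ⟩ = ⟨σ,w⟩ = N^{−1/2}, letting G = −(I − 2|σ⟩⟨σ|)·(I − 2|w⟩⟨w|) and H = 2i·N^{−1/2}·(|w⟩⟨σ| − |σ⟩⟨w|), one has ‖exp(−2iH) − G²‖ ≤ C·N^{−3/2} in operator norm. -/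
set_option maxHeartbeats 1000000

open scoped InnerProductSpace

lemma outer_comp {N : ℕ} (u v x y : EuclideanSpace ℂ (Fin N)) :
    outer u v * outer x y = ⟪v, x⟫_ℂ • outer u y := by
  ext φ
  have h1 : ∀ (a b ψ : EuclideanSpace ℂ (Fin N)), outer a b ψ = ⟪b, ψ⟫_ℂ • a := fun _ _ _ => rfl
  simp [h1, ContinuousLinearMap.mul_apply, inner_smul_right, smul_smul]
  left; ring

lemma norm_outer_le {N : ℕ} (u v : EuclideanSpace ℂ (Fin N)) : ‖outer u v‖ ≤ ‖u‖ * ‖v‖ := by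
  refine ContinuousLinearMap.opNorm_le_bound _ (by positivity) fun φ => ?_
  have h1 : outer u v φ = ⟪v, φ⟫_ℂ • u := rfl
  rw [h1, norm_smul]
  calc ‖⟪v, φ⟫_ℂ‖ * ‖u‖ ≤ ‖v‖ * ‖φ‖ * ‖u‖ := by
        gcongr; exact norm_inner_le_norm v φ
    _ = ‖u‖ * ‖v‖ * ‖φ‖ := by ring

lemma exp_taylor2 {𝔸 : Type*} [NormedRing 𝔸] [NormedAlgebra ℂ 𝔸] [CompleteSpace 𝔸] (X : 𝔸) :
    ‖NormedSpace.exp X - (1 + X + (2:ℂ)⁻¹ • X^2)‖ ≤ ‖X‖^3 * Real.exp ‖X‖ := by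
  have hsum : Summable (fun n => ((n.factorial : ℂ))⁻¹ • X ^ n) :=
    NormedSpace.expSeries_summable' X
  have hsplit := hsum.sum_add_tsum_nat_add 3
  have hrange : (∑ i ∈ Finset.range 3, ((i.factorial : ℂ))⁻¹ • X ^ i) = 1 + X + (2:ℂ)⁻¹ • X^2 := by
    simp [Finset.sum_range_succ, Nat.factorial]
  have hexp : NormedSpace.exp X = ∑' n : ℕ, ((n.factorial : ℂ))⁻¹ • X ^ n :=
    by rw [NormedSpace.exp_eq_tsum (𝕂 := ℂ)]
  have key : NormedSpace.exp X - (1 + X + (2:ℂ)⁻¹ • X^2)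
      = ∑' n : ℕ, (((n+3).factorial : ℂ))⁻¹ • X ^ (n+3) := by
    rw [hexp, ← hsplit, hrange]; abel
  rw [key]
  have hbound : ∀ n : ℕ, ‖(((n+3).factorial : ℂ))⁻¹ • X ^ (n+3)‖
      ≤ ‖X‖^3 * (‖X‖^n / n.factorial) := by
    intro n
    rw [norm_smul]
    have h1 : ‖(((n+3).factorial : ℂ))⁻¹‖ = (((n+3).factorial : ℝ))⁻¹ := by simp
    rw [h1]
    have h2 : ‖X ^ (n+3)‖ ≤ ‖X‖ ^ (n+3) := norm_pow_le' X (by omega)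
    have h3 : (((n+3).factorial : ℝ))⁻¹ ≤ ((n.factorial : ℝ))⁻¹ := by
      apply inv_anti₀
      · positivity
      · exact_mod_cast Nat.factorial_le (by omega)
    calc (((n+3).factorial : ℝ))⁻¹ * ‖X ^ (n+3)‖
        ≤ ((n.factorial : ℝ))⁻¹ * ‖X‖ ^ (n+3) := by
          apply mul_le_mul h3 h2 (norm_nonneg _) (by positivity)
      _ = ‖X‖^3 * (‖X‖^n / n.factorial) := by rw [pow_add]; ring
  have hsum2 : Summable (fun n : ℕ => ‖X‖^3 * (‖X‖^n / n.factorial)) :=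
    (Real.summable_pow_div_factorial ‖X‖).mul_left _
  have hsumnorm : Summable (fun n : ℕ => ‖(((n+3).factorial : ℂ))⁻¹ • X ^ (n+3)‖) :=
    Summable.of_nonneg_of_le (fun n => norm_nonneg _) hbound hsum2
  calc ‖∑' n : ℕ, (((n+3).factorial : ℂ))⁻¹ • X ^ (n+3)‖
      ≤ ∑' n : ℕ, ‖(((n+3).factorial : ℂ))⁻¹ • X ^ (n+3)‖ := norm_tsum_le_tsum_norm hsumnorm
    _ ≤ ∑' n : ℕ, ‖X‖^3 * (‖X‖^n / n.factorial) := Summable.tsum_le_tsum hbound hsumnorm hsum2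
    _ = ‖X‖^3 * ∑' n : ℕ, ‖X‖^n / n.factorial := tsum_mul_left
    _ = ‖X‖^3 * Real.exp ‖X‖ := by
        rw [Real.exp_eq_exp_ℝ, NormedSpace.exp_eq_tsum_div]

lemma key_identity {N : ℕ} (σ w : EuclideanSpace ℂ (Fin N)) (s : ℝ)
    (hσ : ‖σ‖ = 1) (hw : ‖w‖ = 1)
    (hwσ : ⟪w, σ⟫_ℂ = (s:ℂ)) (hσw : ⟪σ, w⟫_ℂ = (s:ℂ))
    (G : EuclideanSpace ℂ (Fin N) →L[ℂ] EuclideanSpace ℂ (Fin N))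
    (hG : G = -((1 - (2 : ℂ) • outer σ σ) * (1 - (2 : ℂ) • outer w w))) :
    (1 + ((4*s:ℝ):ℂ) • (outer w σ - outer σ w)
      + (2:ℂ)⁻¹ • (((4*s:ℝ):ℂ) • (outer w σ - outer σ w))^2) - G^2
    = ((8*s^3:ℝ):ℂ) • (outer w σ - outer σ w) := by
  have hσσ : ⟪σ, σ⟫_ℂ = 1 := by
    rw [inner_self_eq_norm_sq_to_K, hσ]; norm_num
  have hww : ⟪w, w⟫_ℂ = 1 := by
    rw [inner_self_eq_norm_sq_to_K, hw]; norm_num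
  set P1 := outer σ σ with hP1
  set P2 := outer w w with hP2
  set B := outer w σ with hB
  set C := outer σ w with hC
  have t1 : P1 * P1 = P1 := by rw [hP1, outer_comp, hσσ, one_smul]
  have t2 : P1 * P2 = (s:ℂ) • C := by rw [hP1, hP2, hC, outer_comp, hσw]
  have t3 : P1 * B = (s:ℂ) • P1 := by rw [hP1, hB, outer_comp, hσw]
  have t4 : P1 * C = C := by rw [hP1, hC, outer_comp, hσσ, one_smul]
  have t5 : P2 * P1 = (s:ℂ) • B := by rw [hP1, hP2, hB, outer_comp, hwσ]
  have t6 : P2 * P2 = P2 := by rw [hP2, outer_comp, hww, one_smul]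
  have t7 : P2 * B = B := by rw [hP2, hB, outer_comp, hww, one_smul]
  have t8 : P2 * C = (s:ℂ) • P2 := by rw [hP2, hC, outer_comp, hwσ]
  have t9 : B * P1 = B := by rw [hP1, hB, outer_comp, hσσ, one_smul]
  have t10 : B * P2 = (s:ℂ) • P2 := by rw [hP2, hB, outer_comp, hσw]
  have t11 : B * B = (s:ℂ) • B := by rw [hB, outer_comp, hσw]
  have t12 : B * C = P2 := by rw [hB, hC, hP2, outer_comp, hσσ, one_smul]
  have t13 : C * P1 = (s:ℂ) • P1 := by rw [hP1, hC, outer_comp, hwσ]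
  have t14 : C * P2 = C := by rw [hP2, hC, outer_comp, hww, one_smul]
  have t15 : C * B = P1 := by rw [hB, hC, hP1, outer_comp, hww, one_smul]
  have t16 : C * C = (s:ℂ) • C := by rw [hC, outer_comp, hwσ]
  have hGexp : -G = 1 - (2:ℂ) • P1 - (2:ℂ) • P2 + (4*(s:ℂ)) • C := by
    rw [hG, neg_neg]
    simp only [mul_sub, sub_mul, one_mul, mul_one, smul_mul_assoc, mul_smul_comm, t2, smul_smul]
    module
  rw [← neg_sq G, hGexp]
  simp only [sq, mul_add, add_mul, mul_sub, sub_mul, one_mul, mul_one, neg_mul, mul_neg,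
    smul_mul_assoc, mul_smul_comm, t1, t2, t3, t4, t5, t6, t7, t8, t9, t10, t11, t12, t13,
    t14, t15, t16, smul_smul, neg_neg, neg_one_mul, mul_neg_one]
  push_cast
  module

theorem stmt_18 :
    ∃ C > (0 : ℝ), ∀ (N : ℕ), 2 ≤ N → ∀ σ w : EuclideanSpace ℂ (Fin N),
      ‖σ‖ = 1 → ‖w‖ = 1 →
      ⟪w, σ⟫_ℂ = (((N : ℝ) ^ (-(1 : ℝ) / 2) : ℝ) : ℂ) →
      ⟪σ, w⟫_ℂ = (((N : ℝ) ^ (-(1 : ℝ) / 2) : ℝ) : ℂ) →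
      ∀ G H : EuclideanSpace ℂ (Fin N) →L[ℂ] EuclideanSpace ℂ (Fin N),
        G = -((1 - (2 : ℂ) • outer σ σ) * (1 - (2 : ℂ) • outer w w)) →
        H = (2 * Complex.I * (((N : ℝ) ^ (-(1 : ℝ) / 2) : ℝ) : ℂ)) •
              (outer w σ - outer σ w) →
      ‖NormedSpace.exp ((-(2 * Complex.I)) • H) - G ^ 2‖ ≤ C * (N : ℝ) ^ (-(3 : ℝ) / 2) := by
  refine ⟨512 * Real.exp 8 + 16, by positivity, ?_⟩
  intro N hN σ w hσ hw hwσ hσw G H hG hH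
  set s : ℝ := (N:ℝ) ^ (-(1:ℝ)/2) with hs
  have hN1 : (1:ℝ) ≤ (N:ℝ) := by
    have : (2:ℝ) ≤ (N:ℝ) := by exact_mod_cast hN
    linarith
  have hs0 : 0 < s := Real.rpow_pos_of_pos (by linarith) _
  have hs1 : s ≤ 1 := Real.rpow_le_one_of_one_le_of_nonpos hN1 (by norm_num)
  set A := outer w σ - outer σ w with hA
  have key := key_identity σ w s hσ hw hwσ hσw G hG
  have hX : (-(2*Complex.I)) • H = ((4*s:ℝ):ℂ) • A := by
    rw [hH, smul_smul]
    congr 1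
    push_cast
    linear_combination (-4*(s:ℂ)) * Complex.I_sq
  have hAn : ‖A‖ ≤ 2 := by
    rw [hA]
    calc ‖outer w σ - outer σ w‖ ≤ ‖outer w σ‖ + ‖outer σ w‖ := norm_sub_le _ _
      _ ≤ ‖w‖ * ‖σ‖ + ‖σ‖ * ‖w‖ := add_le_add (norm_outer_le w σ) (norm_outer_le σ w)
      _ = 2 := by rw [hσ, hw]; norm_num
  have hcn : ‖((4*s:ℝ):ℂ)‖ = 4 * s := by
    rw [Complex.norm_real, Real.norm_eq_abs, abs_of_pos (by positivity)]
  have hcn3 : ‖((8*s^3:ℝ):ℂ)‖ = 8 * s^3 := by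
    rw [Complex.norm_real, Real.norm_eq_abs, abs_of_pos (by positivity)]
  have hXn : ‖((4*s:ℝ):ℂ) • A‖ ≤ 8 * s := by
    calc ‖((4*s:ℝ):ℂ) • A‖ ≤ ‖((4*s:ℝ):ℂ)‖ * ‖A‖ := ContinuousLinearMap.opNorm_smul_le _ _
      _ ≤ (4 * s) * 2 := by rw [hcn]; exact mul_le_mul_of_nonneg_left hAn (by positivity)
      _ = 8 * s := by ring
  have hs3 : s ^ 3 = (N:ℝ) ^ (-(3:ℝ)/2) := by
    rw [hs, ← Real.rpow_natCast ((N:ℝ) ^ (-(1:ℝ)/2)) 3, ← Real.rpow_mul (by linarith)]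
    norm_num
  rw [hX]
  calc ‖NormedSpace.exp (((4*s:ℝ):ℂ) • A) - G ^ 2‖
      = ‖(NormedSpace.exp (((4*s:ℝ):ℂ) • A)
            - (1 + ((4*s:ℝ):ℂ) • A + (2:ℂ)⁻¹ • (((4*s:ℝ):ℂ) • A)^2))
          + ((1 + ((4*s:ℝ):ℂ) • A + (2:ℂ)⁻¹ • (((4*s:ℝ):ℂ) • A)^2) - G ^ 2)‖ := by
        rw [sub_add_sub_cancel]
    _ ≤ ‖NormedSpace.exp (((4*s:ℝ):ℂ) • A)
            - (1 + ((4*s:ℝ):ℂ) • A + (2:ℂ)⁻¹ • (((4*s:ℝ):ℂ) • A)^2)‖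
          + ‖(1 + ((4*s:ℝ):ℂ) • A + (2:ℂ)⁻¹ • (((4*s:ℝ):ℂ) • A)^2) - G ^ 2‖ :=
        norm_add_le _ _
    _ ≤ ‖((4*s:ℝ):ℂ) • A‖^3 * Real.exp ‖((4*s:ℝ):ℂ) • A‖ + ‖((8*s^3:ℝ):ℂ) • A‖ := by
        gcongr
        · exact exp_taylor2 _
        · rw [key]
    _ ≤ (8*s)^3 * Real.exp 8 + (8*s^3) * 2 := by
        have h1 : ‖((4*s:ℝ):ℂ) • A‖^3 ≤ (8*s)^3 := pow_le_pow_left₀ (norm_nonneg _) hXn 3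
        have h2 : Real.exp ‖((4*s:ℝ):ℂ) • A‖ ≤ Real.exp 8 :=
          Real.exp_le_exp.mpr (hXn.trans (by nlinarith))
        have h3 : ‖((8*s^3:ℝ):ℂ) • A‖ ≤ 8 * s^3 * 2 := by
          calc ‖((8*s^3:ℝ):ℂ) • A‖ ≤ ‖((8*s^3:ℝ):ℂ)‖ * ‖A‖ := ContinuousLinearMap.opNorm_smul_le _ _
            _ ≤ 8 * s^3 * 2 := by rw [hcn3]; exact mul_le_mul_of_nonneg_left hAn (by positivity)
        exact add_le_add (mul_le_mul h1 h2 (Real.exp_pos _).le (by positivity)) h3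
    _ = (512 * Real.exp 8 + 16) * s ^ 3 := by ring
    _ = (512 * Real.exp 8 + 16) * (N:ℝ) ^ (-(3:ℝ)/2) := by rw [hs3]
end
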